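/- Let (Ω, ℙ) be a probability space, S a standard Borel space, X : Ω → S a random element with distribution μ, f : S → ℝ measurable, and E : Ω → ℝ a random variable independent of X whose distribution has density p with respect to Lebesgue measure. Define the additive noise model C = f(X) + E. Then for (law of C)-almost every c ∈ ℝ, the regular conditional distribution of X given C = c has density proportional to x ↦ p(c − f(x)) with respect to μ: condDistrib X C ℙ (c) = (μ.withDensity (x ↦ p(c − f(x))) univ)⁻¹ • μ.withDensity (x ↦ p(c − f(x))). -/

import Mathlib

open MeasureTheory ProbabilityTheory
open scoped ENNReal

/-- **Additive-noise special case.** With `C = f (X) + E`, where `E` is independent of `X`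
and has Lebesgue density `p`, for `(law of C)`-almost every `c` the regular conditional
distribution of `X` given `C = c` has density proportional to `x ↦ p (c - f x)` with
respect to `μ`, the law of `X`. -/
theorem condDistrib_additive_noise_eq_normalized_weighted_prior
    {Ω S : Type*} [MeasurableSpace Ω] [MeasurableSpace S] [StandardBorelSpace S] [Nonempty S]
    (P : Measure Ω) [IsProbabilityMeasure P]
    (X : Ω → S) (hX : Measurable X)
    (μ : Measure S) (hμ : μ = P.map X)
    (f : S → ℝ) (hf : Measurable f)
    (E : Ω → ℝ) (hE : Measurable E)
    (hindep : IndepFun E X P)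
    (p : ℝ → ℝ) (hp_meas : Measurable p) (hp_nonneg : ∀ x, 0 ≤ p x)
    (hE_law : P.map E = volume.withDensity (fun u => ENNReal.ofReal (p u)))
    (C : Ω → ℝ) (hC : C = fun ω => f (X ω) + E ω) :
    ∀ᵐ c ∂(P.map C),
      condDistrib X C P c =
        ((μ.withDensity (fun x => ENNReal.ofReal (p (c - f x)))) Set.univ)⁻¹ •
          μ.withDensity (fun x => ENNReal.ofReal (p (c - f x))) := by
  have hCmeas : Measurable C := by rw [hC]; exact (hf.comp hX).add hE
  haveI : IsProbabilityMeasure μ := by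
    rw [hμ]; exact Measure.isProbabilityMeasure_map hX.aemeasurable
  haveI : IsProbabilityMeasure (P.map C) := Measure.isProbabilityMeasure_map hCmeas.aemeasurable
  -- notation
  set w : ℝ → S → ℝ≥0∞ := fun c x => ENNReal.ofReal (p (c - f x)) with hw
  have hW : Measurable (fun q : ℝ × S => w q.1 q.2) :=
    ENNReal.measurable_ofReal.comp
      (hp_meas.comp (measurable_fst.sub (hf.comp measurable_snd)))
  set g : ℝ → ℝ≥0∞ := fun c => ∫⁻ x, w c x ∂μ with hg
  have hgm : Measurable g := hW.lintegral_prod_right'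
  have hg_univ : ∀ c, (μ.withDensity (w c)) Set.univ = g c := fun c => by
    rw [withDensity_apply _ MeasurableSet.univ, setLIntegral_univ]
  -- the joint law ρ of (C, X)
  set ρ : Measure (ℝ × S) := P.map (fun ω => (C ω, X ω)) with hρdef
  haveI : IsProbabilityMeasure ρ :=
    Measure.isProbabilityMeasure_map (hCmeas.prodMk hX).aemeasurable
  have hT : Measurable (fun q : S × ℝ => (f q.1 + q.2, q.1)) :=
    ((hf.comp measurable_fst).add measurable_snd).prodMk measurable_fst
  have hjoint : P.map (fun ω => (X ω, E ω)) = μ.prod (P.map E) := by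
    rw [hμ]
    exact (indepFun_iff_map_prod_eq_prod_map_map hX.aemeasurable hE.aemeasurable).mp hindep.symm
  have hρmap : ρ = (μ.prod (volume.withDensity fun u => ENNReal.ofReal (p u))).map
      (fun q : S × ℝ => (f q.1 + q.2, q.1)) := by
    rw [hρdef, ← hE_law, ← hjoint,
      Measure.map_map hT (hX.prodMk hE)]
    congr 1
    funext ω
    simp [hC]
  -- ρ has density w with respect to volume ×ₘ μ
  have hρ : ρ = (volume.prod μ).withDensity (fun q => w q.1 q.2) := by
    ext s hs
    rw [hρmap, Measure.map_apply hT hs, Measure.prod_apply (hT hs),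
      withDensity_apply _ hs, ← lintegral_indicator hs _,
      lintegral_prod_symm _ (hW.indicator hs).aemeasurable]
    refine lintegral_congr fun x => ?_
    have hBx : MeasurableSet ((fun e : ℝ => (f x + e, x)) ⁻¹' s) :=
      (((measurable_const.add measurable_id).prodMk measurable_const)) hs
    have hpre : Prod.mk x ⁻¹' ((fun q : S × ℝ => (f q.1 + q.2, q.1)) ⁻¹' s)
        = (fun e : ℝ => (f x + e, x)) ⁻¹' s := rfl
    rw [hpre, withDensity_apply _ hBx, ← lintegral_indicator hBx _]
    have hcomp : ∀ e : ℝ,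
        ((fun e : ℝ => (f x + e, x)) ⁻¹' s).indicator (fun e => ENNReal.ofReal (p e)) e
          = s.indicator (fun q : ℝ × S => w q.1 q.2) (f x + e, x) := by
      intro e
      by_cases h : (f x + e, x) ∈ s <;>
        simp [Set.indicator_apply, h, hw, add_sub_cancel_left]
    simp_rw [hcomp]
    exact (measurePreserving_add_left volume (f x)).lintegral_comp
      ((hW.indicator hs).comp ((measurable_id.prodMk measurable_const)))
  -- first marginal
  have hfst : ρ.fst = P.map C := Measure.fst_map_prodMk hX
  have hν : P.map C = volume.withDensity g := by
    ext s hs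
    rw [← hfst, Measure.fst_apply hs, hρ,
      withDensity_apply _ (measurable_fst hs), ← lintegral_indicator (measurable_fst hs) _,
      lintegral_prod _ ((hW.indicator (measurable_fst hs))).aemeasurable,
      withDensity_apply _ hs, ← lintegral_indicator hs _]
    refine lintegral_congr fun c => ?_
    by_cases h : c ∈ s
    · simp only [Set.indicator_of_mem h, hg]
      refine lintegral_congr fun x => ?_
      simp [Set.indicator_apply, h]
    · simp [Set.indicator_of_notMem h, h]
  -- g is a.e. finite
  have h_int_g : ∫⁻ c, g c ∂volume = 1 := by
    have := measure_univ (μ := P.map C)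
    rw [hν, withDensity_apply _ MeasurableSet.univ, setLIntegral_univ] at this
    exact this
  have h_ae_lt : ∀ᵐ c ∂volume, g c < ⊤ :=
    ae_lt_top hgm (by rw [h_int_g]; exact ENNReal.one_ne_top)
  -- the candidate kernel
  set κfun : ℝ → Measure S :=
    fun c => if g c < ⊤ then (g c)⁻¹ • (μ.withDensity (w c)) else 0 with hκfun
  have hκ_apply : ∀ c (s : Set S), MeasurableSet s →
      κfun c s = if g c < ⊤ then (g c)⁻¹ * (μ.withDensity (w c)) s else 0 := by
    intro c s hs
    rw [hκfun]
    by_cases h : g c < ⊤ <;> simp [h]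
  have hκmeas : ∀ s : Set S, MeasurableSet s → Measurable (fun c => κfun c s) := by
    intro s hs
    have h1 : Measurable fun c => (μ.withDensity (w c)) s := by
      have : ∀ c, (μ.withDensity (w c)) s = ∫⁻ x, ({q : ℝ × S | q.2 ∈ s}.indicator
          (fun q => w q.1 q.2)) (c, x) ∂μ := by
        intro c
        rw [withDensity_apply _ hs, ← lintegral_indicator hs _]
        refine lintegral_congr fun x => ?_
        by_cases h : x ∈ s <;> simp [Set.indicator_apply, h]
      simp_rw [this]
      exact (hW.indicator (measurable_snd hs)).lintegral_prod_right'
    simp_rw [fun c => hκ_apply c s hs]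
    exact Measurable.ite (measurableSet_lt hgm measurable_const)
      (hgm.inv.mul h1) measurable_const
  set κ : ProbabilityTheory.Kernel ℝ S :=
    ⟨κfun, Measure.measurable_of_measurable_coe _ hκmeas⟩ with hκdef
  have hκ_eq : ∀ c, κ c = κfun c := fun c => rfl
  haveI : IsFiniteKernel κ := by
    refine ⟨⟨1, ENNReal.one_lt_top, fun c => ?_⟩⟩
    rw [hκ_eq, hκ_apply c _ MeasurableSet.univ]
    by_cases h : g c < ⊤
    · simp only [h, if_true, hg_univ]
      rcases eq_or_ne (g c) 0 with h0 | h0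
      · simp [h0]
      · rw [ENNReal.inv_mul_cancel h0 h.ne]
    · simp [h]
  -- disintegration property
  have hcomp : ρ = ρ.fst ⊗ₘ κ := by
    ext s hs
    rw [Measure.compProd_apply hs, hfst, hν,
      lintegral_withDensity_eq_lintegral_mul _ hgm
        (Kernel.measurable_kernel_prodMk_left hs), hρ,
      withDensity_apply _ hs, ← lintegral_indicator hs _,
      lintegral_prod _ ((hW.indicator hs)).aemeasurable]
    refine lintegral_congr_ae (h_ae_lt.mono fun c hc => ?_)
    have hsec : MeasurableSet (Prod.mk c ⁻¹' s) := measurable_prodMk_left hs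
    have hinner : ∫⁻ x, s.indicator (fun q : ℝ × S => w q.1 q.2) (c, x) ∂μ
        = (μ.withDensity (w c)) (Prod.mk c ⁻¹' s) := by
      rw [withDensity_apply _ hsec, ← lintegral_indicator hsec _]
      refine lintegral_congr fun x => ?_
      by_cases h : (c, x) ∈ s <;> simp [Set.indicator_apply, h, Set.mem_preimage]
    simp only [Pi.mul_apply]
    rw [hinner, hκ_eq, hκ_apply c _ hsec]
    simp only [hc, if_true]
    rcases eq_or_ne (g c) 0 with h0 | h0
    · have hle : (μ.withDensity (w c)) (Prod.mk c ⁻¹' s) ≤ g c := by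
        rw [← hg_univ c]; exact measure_mono (Set.subset_univ _)
      have : (μ.withDensity (w c)) (Prod.mk c ⁻¹' s) = 0 :=
        le_antisymm (h0 ▸ hle) zero_le
      simp [this, h0]
    · rw [← mul_assoc, ENNReal.mul_inv_cancel h0 hc.ne, one_mul]
  -- uniqueness of disintegration
  have huniq : ∀ᵐ c ∂ρ.fst, κ c = ρ.condKernel c :=
    eq_condKernel_of_measure_eq_compProd κ hcomp
  rw [hfst] at huniq
  have h_ae_lt' : ∀ᵐ c ∂(P.map C), g c < ⊤ := by
    rw [hν]
    exact (withDensity_absolutelyContinuous volume g).ae_le h_ae_lt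
  filter_upwards [huniq, h_ae_lt'] with c hc hlt
  have : condDistrib X C P c = ρ.condKernel c := by
    rw [condDistrib_def]
  rw [this, ← hc, hκ_eq, hκfun]
  simp only [hlt, if_true, hg_univ]
  rw [← hg_univ c]
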